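/- (Classification of polycyclic totally ordered dimension groups; honest form of Theorem 1(i).) Let n ≥ 2 and let λ, λ' : Fin n → ℝ be two n-tuples of real numbers, each linearly independent over ℚ. Let G = ℤλ₁ + ⋯ + ℤλₙ and G' = ℤλ'₁ + ⋯ + ℤλ'ₙ be the additive subgroups of ℝ they generate, each with the linear order induced from ℝ. Then G and G' are order-isomorphic if and only if there exist a real number t > 0 and an n × n integer matrix A with det A = ±1 such that λ'ᵢ = t · Σⱼ Aᵢⱼ λⱼ for all i. -/

import Mathlib

lemma mem_closure_range_iff {n : ℕ} (v : Fin n → ℝ) (x : ℝ) :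
    x ∈ AddSubgroup.closure (Set.range v) ↔ ∃ c : Fin n → ℤ, x = ∑ j, (c j : ℝ) * v j := by
  rw [← Submodule.span_int_eq_addSubgroupClosure, Submodule.mem_toAddSubgroup,
    Submodule.mem_span_range_iff_exists_fun]
  constructor
  · rintro ⟨c, hc⟩
    exact ⟨c, by rw [← hc]; simp [zsmul_eq_mul]⟩
  · rintro ⟨c, hc⟩
    exact ⟨c, by rw [hc]; simp [zsmul_eq_mul]⟩

lemma ratio_eq {G G' : AddSubgroup ℝ} (φ : G ≃+ G')
    (hφ : ∀ x y : G, x ≤ y ↔ φ x ≤ φ y) :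
    ∀ x y : G, 0 < (x:ℝ) → 0 < (y:ℝ) → (φ x : ℝ) * y = (φ y : ℝ) * x := by
  have hpos : ∀ z : G, 0 < (z:ℝ) → 0 < ((φ z):ℝ) := by
    intro z hz
    by_contra h
    push_neg at h
    have h0 : φ z ≤ φ 0 := by
      rw [← Subtype.coe_le_coe]
      simpa using h
    have : z ≤ 0 := (hφ z 0).2 h0
    rw [← Subtype.coe_le_coe] at this
    simp at this
    linarith
  have aux : ∀ x y : G, 0 < (x:ℝ) → 0 < (y:ℝ) → ¬ ((φ x:ℝ) * y < (φ y:ℝ) * x) := by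
    intro x y hx hy h
    have hφx := hpos x hx
    have hφy := hpos y hy
    have hdiv : (φ x:ℝ) / (φ y:ℝ) < (x:ℝ) / (y:ℝ) :=
      (div_lt_div_iff₀ hφy hy).2 (by linarith [mul_comm (x:ℝ) (φ y : ℝ)])
    obtain ⟨r, hr1, hr2⟩ := exists_rat_btwn hdiv
    have hq : (0:ℝ) < (r.den:ℝ) := by exact_mod_cast r.pos
    rw [Rat.cast_def] at hr1 hr2
    have h2 : (r.num:ℝ) * y < (x:ℝ) * r.den := (div_lt_div_iff₀ hq hy).1 hr2
    have hle : (r.num • y : G) ≤ ((r.den:ℤ) • x : G) := by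
      rw [← Subtype.coe_le_coe]
      push_cast [zsmul_eq_mul]
      nlinarith
    have hle2 := (hφ _ _).1 hle
    rw [map_zsmul, map_zsmul, ← Subtype.coe_le_coe] at hle2
    push_cast [zsmul_eq_mul] at hle2
    have h1 : (φ x:ℝ) * r.den < (r.num:ℝ) * (φ y:ℝ) := (div_lt_div_iff₀ hφy hq).1 hr1
    nlinarith
  intro x y hx hy
  rcases lt_trichotomy ((φ x:ℝ) * y) ((φ y:ℝ) * x) with h|h|h
  · exact absurd h (aux x y hx hy)
  · exact h
  · exact absurd h (aux y x hy hx)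

/-- Classification of polycyclic totally ordered dimension groups: the
`ℤ`-modules `ℤλ₁ + ⋯ + ℤλₙ` and `ℤλ'₁ + ⋯ + ℤλ'ₙ` (with the order induced
from `ℝ`, and `λ`, `λ'` each linearly independent over `ℚ`, `n ≥ 2`) are order
isomorphic iff `λ' = t · A λ` for some `t > 0` and `A ∈ GL(n, ℤ)`. -/
theorem stmt_10 (n : ℕ) (hn : 2 ≤ n) (lam lam' : Fin n → ℝ)
    (hlam : LinearIndependent ℚ lam) (hlam' : LinearIndependent ℚ lam')
    (G G' : AddSubgroup ℝ)
    (hG : G = AddSubgroup.closure (Set.range lam))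
    (hG' : G' = AddSubgroup.closure (Set.range lam')) :
    (∃ φ : G ≃+ G', ∀ x y : G, x ≤ y ↔ φ x ≤ φ y) ↔
    (∃ t : ℝ, 0 < t ∧ ∃ A : Matrix (Fin n) (Fin n) ℤ,
      (A.det = 1 ∨ A.det = -1) ∧
      ∀ i, lam' i = t * ∑ j, (A i j : ℝ) * lam j) := by
  constructor
  · rintro ⟨φ, hφ⟩
    have hpos : ∀ z : G, 0 < (z:ℝ) → 0 < ((φ z):ℝ) := by
      intro z hz
      by_contra h
      push_neg at h
      have h0 : φ z ≤ φ 0 := by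
        rw [← Subtype.coe_le_coe]; simpa using h
      have : z ≤ 0 := (hφ z 0).2 h0
      rw [← Subtype.coe_le_coe] at this
      simp at this
      linarith
    obtain ⟨x0, hx0⟩ : ∃ x0 : G, 0 < (x0:ℝ) := by
      have hmem : lam ⟨0, by omega⟩ ∈ G :=
        hG ▸ AddSubgroup.subset_closure ⟨_, rfl⟩
      rcases (hlam.ne_zero ⟨0, by omega⟩).lt_or_gt with h|h
      · exact ⟨⟨-lam _, AddSubgroup.neg_mem _ hmem⟩, by simpa using h⟩
      · exact ⟨⟨lam _, hmem⟩, h⟩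
    set t : ℝ := (φ x0 : ℝ) / (x0 : ℝ) with ht_def
    have ht : 0 < t := div_pos (hpos x0 hx0) hx0
    have key : ∀ z : G, (φ z : ℝ) = t * z := by
      intro z
      rcases lt_trichotomy ((z:ℝ)) 0 with h|h|h
      · have hr := ratio_eq φ hφ (-z) x0 (by simpa using h) hx0
        rw [map_neg] at hr
        push_cast at hr
        rw [ht_def]
        field_simp
        nlinarith [hx0]
      · have hz : z = 0 := by ext; simpa using h  -- maybe Subtype.ext
        rw [hz, map_zero]
        simp
      · have hr := ratio_eq φ hφ z x0 h hx0
        rw [ht_def]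
        field_simp
        nlinarith [hx0]
    refine ⟨t, ht, ?_⟩
    have hA : ∀ i, ∃ c : Fin n → ℤ, lam' i = t * ∑ j, (c j:ℝ) * lam j := by
      intro i
      have hmem' : lam' i ∈ G' := hG' ▸ AddSubgroup.subset_closure ⟨i, rfl⟩
      obtain ⟨g, hg⟩ := φ.surjective ⟨lam' i, hmem'⟩
      have hgval : lam' i = t * (g:ℝ) := by
        have := key g; rw [hg] at this; exact this
      obtain ⟨c, hc⟩ := (mem_closure_range_iff lam g).1 (hG ▸ g.2)
      exact ⟨c, by rw [hgval, hc]⟩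
    choose A hAs using hA
    have hB : ∀ j, ∃ c : Fin n → ℤ, t * lam j = ∑ i, (c i:ℝ) * lam' i := by
      intro j
      have hmem : lam j ∈ G := hG ▸ AddSubgroup.subset_closure ⟨j, rfl⟩
      have hval : (φ ⟨lam j, hmem⟩ : ℝ) = t * lam j := key _
      have hmem2 : t * lam j ∈ AddSubgroup.closure (Set.range lam') := by
        rw [← hval, ← hG']
        exact (φ ⟨lam j, hmem⟩).2
      exact (mem_closure_range_iff _ _).1 hmem2
    choose B hBs using hB
    set A' : Matrix (Fin n) (Fin n) ℤ := Matrix.of A with hA'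
    set B' : Matrix (Fin n) (Fin n) ℤ := Matrix.of B with hB'
    have hcomb : ∀ k, ∑ i, ((A' * B') k i : ℝ) * lam' i = lam' k := by
      intro k
      have e1 : ∑ i, ((A' * B') k i : ℝ) * lam' i
          = ∑ j, (A k j : ℝ) * ∑ i, (B j i : ℝ) * lam' i := by
        simp only [Matrix.mul_apply]
        push_cast
        simp only [Finset.sum_mul, Finset.mul_sum]
        rw [Finset.sum_comm]
        exact Finset.sum_congr rfl fun j _ => Finset.sum_congr rfl fun i _ => by
          simp only [hA', hB', Matrix.of_apply]; ring
      rw [e1]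
      have e2 : ∀ j, (A k j : ℝ) * ∑ i, (B j i : ℝ) * lam' i
          = t * ((A k j : ℝ) * lam j) := by
        intro j; rw [← hBs j]; ring
      rw [Finset.sum_congr rfl fun j _ => e2 j, ← Finset.mul_sum, ← hAs k]
    have hAB : A' * B' = 1 := by
      ext k i
      have hz : ∑ i, (fun i => ((A' * B') k i : ℚ) - if i = k then 1 else 0) i • lam' i = 0 := by
        simp only [sub_smul, Finset.sum_sub_distrib, Rat.smul_def, ite_smul, one_smul, zero_smul]
        push_cast
        rw [hcomb k]
        simp
      have := Fintype.linearIndependent_iff.1 hlam' _ hz i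
      simp only [sub_eq_zero] at this
      by_cases hik : i = k
      · subst hik
        simp only [if_pos rfl] at this
        rw [Matrix.one_apply_eq]
        exact_mod_cast this
      · simp only [if_neg hik] at this
        rw [Matrix.one_apply_ne (Ne.symm hik)]
        exact_mod_cast this
    refine ⟨A', ?_, fun i => hAs i⟩
    have hdet : A'.det * B'.det = 1 := by
      rw [← Matrix.det_mul, hAB, Matrix.det_one]
    have := Int.isUnit_iff.1 (IsUnit.of_mul_eq_one _ hdet)
    exact this
  · rintro ⟨t, ht, A, hdet, hA⟩
    set B : Matrix (Fin n) (Fin n) ℤ := A.det • A.adjugate with hBdef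
    have hdet2 : A.det * A.det = 1 := by rcases hdet with h|h <;> rw [h] <;> norm_num
    have hBA : B * A = 1 := by
      rw [hBdef, Matrix.smul_mul, Matrix.adjugate_mul, smul_smul, hdet2, one_smul]
    -- t * lam j ∈ closure (range lam')
    have hforward : ∀ j, t * lam j ∈ AddSubgroup.closure (Set.range lam') := by
      intro j
      rw [mem_closure_range_iff]
      refine ⟨fun i => B j i, ?_⟩
      have : ∑ i, (B j i : ℝ) * lam' i = t * ∑ k, ((B * A) j k : ℝ) * lam k := by
        simp only [Matrix.mul_apply]
        push_cast
        simp only [Finset.mul_sum, Finset.sum_mul]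
        rw [Finset.sum_comm]
        refine Finset.sum_congr rfl fun i _ => ?_
        rw [hA i, Finset.mul_sum, Finset.mul_sum]
        refine Finset.sum_congr rfl fun k _ => by ring
      rw [this, hBA]
      have : ∑ k, ((1 : Matrix (Fin n) (Fin n) ℤ) j k : ℝ) * lam k = lam j := by
        rw [Finset.sum_eq_single j]
        · simp
        · intro b _ hb
          rw [Matrix.one_apply_ne (Ne.symm hb)]
          simp
        · simp
      rw [this]
    have hmap : G' = G.map (AddMonoidHom.mulLeft t) := by
      rw [hG, hG', AddMonoidHom.map_closure]
      apply le_antisymm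
      · rw [AddSubgroup.closure_le]
        rintro x ⟨i, rfl⟩
        rw [SetLike.mem_coe, ← AddMonoidHom.map_closure, AddSubgroup.mem_map]
        refine ⟨∑ j, (A i j : ℝ) * lam j, ?_, ?_⟩
        · rw [mem_closure_range_iff]
          exact ⟨fun j => A i j, rfl⟩
        · simp [AddMonoidHom.mulLeft, hA i, Finset.mul_sum]
      · rw [AddSubgroup.closure_le]
        rintro x ⟨g, hg, rfl⟩
        rcases hg with ⟨j, rfl⟩
        simpa [AddMonoidHom.mulLeft] using hforward j
    have fwd : ∀ x : ℝ, x ∈ G → t * x ∈ G' := by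
      intro x hx
      rw [hmap]
      exact ⟨x, hx, rfl⟩
    have bwd : ∀ y : ℝ, y ∈ G' → t⁻¹ * y ∈ G := by
      intro y hy
      rw [hmap] at hy
      obtain ⟨x, hx, rfl⟩ := hy
      have : t⁻¹ * (AddMonoidHom.mulLeft t x) = x := by
        simp [AddMonoidHom.mulLeft]
        field_simp
      rwa [this]
    refine ⟨{ toFun := fun x => ⟨t * x, fwd x x.2⟩,
              invFun := fun y => ⟨t⁻¹ * y, bwd y y.2⟩,
              left_inv := fun x => by
                ext
                simp only
                field_simp,
              right_inv := fun y => by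
                ext
                simp only
                field_simp,
              map_add' := fun x y => by
                ext
                simp [mul_add] }, ?_⟩
    intro x y
    rw [← Subtype.coe_le_coe, ← Subtype.coe_le_coe]
    simp only [AddEquiv.coe_mk, Equiv.coe_fn_mk]
    exact (mul_le_mul_iff_right₀ ht).symm
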